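/- Let H be a real Hilbert space. Then H has the Kirszbraun property: given finitely many points x₁,…,xₙ ∈ H, y₁,…,yₙ ∈ H and radii r₁,…,rₙ > 0 such that ‖yᵢ − yⱼ‖ ≤ ‖xᵢ − xⱼ‖ for all i, j, and the closed balls B(xᵢ, rᵢ) have a common point, then the closed balls B(yᵢ, rᵢ) have a common point. -/

import Mathlib

open Filter Topology

private lemma kz_expand {H : Type*} [NormedAddCommGroup H] [InnerProductSpace ℝ H]
    (w c v : H) (t : ℝ) :
    ‖(w + t • (c - w)) - v‖^2
      = ‖w - v‖^2 - 2*t*(inner ℝ (w - c) (w - v) : ℝ) + t^2 * ‖w - c‖^2 := by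
  have h : (w + t • (c - w)) - v = (w - v) + t • (c - w) := by abel
  rw [h, norm_add_sq_real, real_inner_smul_right, norm_smul, mul_pow, real_inner_comm]
  have h2 : (inner ℝ (c - w) (w - v) : ℝ) = -(inner ℝ (w - c) (w - v) : ℝ) := by
    rw [← inner_neg_left]; norm_num
  rw [h2, norm_sub_rev c w]
  simp [Real.norm_eq_abs, sq_abs]
  ring

private lemma kz_two_inner {H : Type*} [NormedAddCommGroup H] [InnerProductSpace ℝ H]
    (a b : H) : 2 * (inner ℝ a b : ℝ) = ‖a‖^2 + ‖b‖^2 - ‖a - b‖^2 := by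
  rw [norm_sub_sq_real]; ring

private lemma kz_sum_sq {H : Type*} [NormedAddCommGroup H] [InnerProductSpace ℝ H]
    (T : Finset H) (cw : H → ℝ) (f : H → H) :
    ‖∑ z ∈ T, cw z • f z‖^2
      = ∑ z ∈ T, ∑ z' ∈ T, cw z * cw z' * (inner ℝ (f z) (f z') : ℝ) := by
  rw [← real_inner_self_eq_norm_sq, sum_inner]
  refine Finset.sum_congr rfl fun z _ => ?_
  rw [inner_sum]
  refine Finset.sum_congr rfl fun z' _ => ?_
  rw [real_inner_smul_left, real_inner_smul_right]; ring

/-- Kirszbraun intersection property of real Hilbert spaces: if `‖yᵢ − yⱼ‖ ≤ ‖xᵢ − xⱼ‖`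
for all `i, j` and the closed balls `B(xᵢ, rᵢ)` have a common point, then so do the
closed balls `B(yᵢ, rᵢ)`. -/
theorem hilbert_kirszbraun_property
    {H : Type*} [NormedAddCommGroup H] [InnerProductSpace ℝ H] [CompleteSpace H]
    (n : ℕ) (x y : Fin n → H) (r : Fin n → ℝ) (hr : ∀ i, 0 < r i)
    (hcontract : ∀ i j, ‖y i - y j‖ ≤ ‖x i - x j‖)
    (hx : (⋂ i, Metric.closedBall (x i) (r i)).Nonempty) :
    (⋂ i, Metric.closedBall (y i) (r i)).Nonempty := by
  classical
  rcases Nat.eq_zero_or_pos n with hn | hn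
  · subst hn; exact ⟨0, by simp⟩
  have hFn : Nonempty (Fin n) := ⟨⟨0, hn⟩⟩
  have huniv : (Finset.univ : Finset (Fin n)).Nonempty := Finset.univ_nonempty
  obtain ⟨p, hp⟩ := hx
  have hp' : ∀ i, ‖p - x i‖ ≤ r i := fun i => by
    have := Set.mem_iInter.1 hp i
    simpa [dist_eq_norm] using this
  -- the objective function
  set g : H → ℝ := fun w => Finset.univ.sup' huniv (fun i => ‖w - y i‖^2 - ‖p - x i‖^2)
    with hg_def
  have hgcont : Continuous g := by
    apply Continuous.finset_sup'_apply huniv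
    intro i _
    have : Continuous fun w : H => ‖w - y i‖^2 - ‖p - x i‖^2 := by fun_prop
    exact this
  -- minimize over the convex hull of the `y i`
  set K : Set H := convexHull ℝ (Set.range y) with hK_def
  have hKcp : IsCompact K := (Set.finite_range y).isCompact_convexHull ℝ
  have hKne : K.Nonempty := ⟨y ⟨0, hn⟩, subset_convexHull ℝ _ ⟨⟨0, hn⟩, rfl⟩⟩
  have hKcx : Convex ℝ K := convex_convexHull ℝ _
  obtain ⟨w, hwK, hwmin⟩ := hKcp.exists_isMinOn hKne hgcont.continuousOn
  have hwmin' : ∀ u ∈ K, g w ≤ g u := fun u hu => hwmin hu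
  set m : ℝ := g w with hm_def
  -- the active set
  set I : Finset (Fin n) :=
    Finset.univ.filter (fun i => ‖w - y i‖^2 - ‖p - x i‖^2 = m) with hI_def
  have hIne : I.Nonempty := by
    obtain ⟨i, _, hi⟩ := Finset.exists_mem_eq_sup' huniv
      (fun i => ‖w - y i‖^2 - ‖p - x i‖^2)
    exact ⟨i, Finset.mem_filter.2 ⟨Finset.mem_univ i, hi.symm⟩⟩
  have hIact : ∀ i ∈ I, ‖w - y i‖^2 - ‖p - x i‖^2 = m := fun i hi =>
    (Finset.mem_filter.1 hi).2
  have hle : ∀ i, ‖w - y i‖^2 - ‖p - x i‖^2 ≤ m := fun i =>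
    Finset.le_sup' (fun i => ‖w - y i‖^2 - ‖p - x i‖^2) (Finset.mem_univ i)
  have hIlt : ∀ j, j ∉ I → ‖w - y j‖^2 - ‖p - x j‖^2 < m := by
    intro j hj
    refine lt_of_le_of_ne (hle j) fun h => hj (Finset.mem_filter.2 ⟨Finset.mem_univ j, h⟩)
  set T : Finset H := I.image y with hT_def
  set C : Set H := convexHull ℝ (T : Set H) with hC_def
  have hCcx : Convex ℝ C := convex_convexHull ℝ _
  have hCK : C ⊆ K := convexHull_mono (by
    intro z hz
    obtain ⟨i, _, rfl⟩ := Finset.mem_image.1 (by exact_mod_cast hz)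
    exact ⟨i, rfl⟩)
  have hyC : ∀ i ∈ I, y i ∈ C :=
    fun i hi => subset_convexHull ℝ _ (by exact_mod_cast Finset.mem_image_of_mem y hi)
  -- Step A : the minimizer lies in the convex hull of the active points
  have hwC : w ∈ C := by
    by_contra hwC'
    obtain ⟨i₀, hi₀⟩ := hIne
    have hCne : C.Nonempty := ⟨y i₀, hyC _ hi₀⟩
    have hCcp : IsCompact C := by
      rw [hC_def]; exact T.finite_toSet.isCompact_convexHull ℝ
    obtain ⟨c, hcC, hcmin⟩ :=
      exists_norm_eq_iInf_of_complete_convex hCne hCcp.isComplete hCcx w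
    have hproj : ∀ z ∈ C, (inner ℝ (w - c) (z - c) : ℝ) ≤ 0 :=
      (norm_eq_iInf_iff_real_inner_le_zero hCcx hcC).1 hcmin
    have hwc : w ≠ c := fun h => hwC' (h ▸ hcC)
    have hε : 0 < ‖w - c‖^2 := by
      have : w - c ≠ 0 := sub_ne_zero_of_ne hwc
      exact pow_pos (norm_pos_iff.2 this) 2
    have hkey : ∀ i ∈ I, ‖w - c‖^2 ≤ (inner ℝ (w - c) (w - y i) : ℝ) := by
      intro i hi
      have hsplit : w - y i = (w - c) + (c - y i) := by abel
      have h2 : (0:ℝ) ≤ inner ℝ (w - c) (c - y i) := by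
        have h3 := hproj (y i) (hyC i hi)
        rw [show c - y i = -(y i - c) by abel, inner_neg_right]
        linarith
      have h4 : (inner ℝ (w - c) (w - y i) : ℝ)
          = ‖w - c‖^2 + inner ℝ (w - c) (c - y i) := by
        rw [hsplit, inner_add_right, real_inner_self_eq_norm_sq]
      linarith
    have hev : ∀ᶠ t in 𝓝[>] (0:ℝ),
        (∀ j : Fin n, ‖(w + t • (c - w)) - y j‖^2 - ‖p - x j‖^2 < m)
          ∧ t ∈ Set.Ioc (0:ℝ) 1 := by
      refine Filter.Eventually.and ?_ (Ioc_mem_nhdsGT_of_mem ⟨le_refl 0, zero_lt_one⟩)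
      rw [eventually_all]
      intro j
      by_cases hj : j ∈ I
      · filter_upwards [Ioc_mem_nhdsGT_of_mem
          (⟨le_refl (0:ℝ), zero_lt_one⟩ : (0:ℝ) ∈ Set.Ico (0:ℝ) 1)] with t ht
        rw [kz_expand]
        have h5 := hkey j hj
        have h6 := hIact j hj
        have e1 : t^2 * ‖w - c‖^2 ≤ t * ‖w - c‖^2 := by
          nlinarith [mul_nonneg (mul_nonneg (sub_nonneg.2 ht.2) ht.1.le) hε.le]
        have e2 : t * ‖w - c‖^2 ≤ t * (inner ℝ (w - c) (w - y j) : ℝ) :=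
          mul_le_mul_of_nonneg_left h5 ht.1.le
        have e3 : 0 < t * ‖w - c‖^2 := mul_pos ht.1 hε
        linarith
      · have hc : ContinuousAt
            (fun t : ℝ => ‖(w + t • (c - w)) - y j‖^2 - ‖p - x j‖^2) 0 := by
          fun_prop
        have h0 : (fun t : ℝ => ‖(w + t • (c - w)) - y j‖^2 - ‖p - x j‖^2) 0 < m := by
          simpa using hIlt j hj
        exact (hc.eventually_lt continuousAt_const h0).filter_mono nhdsWithin_le_nhds
    obtain ⟨t, hall, ht0, ht1⟩ := hev.exists
    set u := w + t • (c - w) with hu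
    have huK : u ∈ K := by
      have h7 := hKcx hwK (hCK hcC) (a := 1 - t) (b := t)
        (by linarith) (le_of_lt ht0) (by ring)
      have : u = (1 - t) • w + t • c := by rw [hu]; module
      rw [this]; exact h7
    have hlt : g u < m := (Finset.sup'_lt_iff huniv).2 fun j _ => hall j
    exact absurd (hwmin' u huK) (not_le.2 hlt)
  -- Step B : m ≤ 0
  have hm_le : m ≤ 0 := by
    by_contra hm'
    push_neg at hm'
    rw [hC_def, Finset.convexHull_eq] at hwC
    obtain ⟨cw, hcw0, hcw1, hcwc⟩ := hwC
    have hw_eq : ∑ z ∈ T, cw z • z = w := by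
      rw [← hcwc, Finset.centerMass_eq_of_sum_1 _ _ hcw1]
      rfl
    have hind : ∀ z, z ∈ T → ∃ i, i ∈ I ∧ y i = z := by
      intro z hz
      rw [hT_def] at hz
      obtain ⟨i, hi, rfl⟩ := Finset.mem_image.1 hz
      exact ⟨i, hi, rfl⟩
    choose! ind hindI hindy using hind
    have hpair : ∀ z ∈ T, ∀ z' ∈ T,
        m + (inner ℝ (p - x (ind z)) (p - x (ind z')) : ℝ)
          ≤ (inner ℝ (w - z) (w - z') : ℝ) := by
      intro z hz z' hz'
      have e1 : ‖w - z‖^2 = m + ‖p - x (ind z)‖^2 := by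
        have := hIact _ (hindI z hz)
        rw [hindy z hz] at this; linarith
      have e2 : ‖w - z'‖^2 = m + ‖p - x (ind z')‖^2 := by
        have := hIact _ (hindI z' hz')
        rw [hindy z' hz'] at this; linarith
      have e3 : ‖z - z'‖^2 ≤ ‖x (ind z) - x (ind z')‖^2 := by
        have h := hcontract (ind z) (ind z')
        rw [hindy z hz, hindy z' hz'] at h
        exact pow_le_pow_left₀ (norm_nonneg _) h 2
      have h5 := kz_two_inner (w - z) (w - z')
      have h6 := kz_two_inner (p - x (ind z)) (p - x (ind z'))
      have h7 : (w - z) - (w - z') = -(z - z') := by abel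
      have h8 : (p - x (ind z)) - (p - x (ind z'))
          = -(x (ind z) - x (ind z')) := by abel
      rw [h7, norm_neg] at h5
      rw [h8, norm_neg] at h6
      linarith
    have hzero : ∑ z ∈ T, cw z • (w - z) = 0 := by
      simp only [smul_sub, Finset.sum_sub_distrib, ← Finset.sum_smul, hcw1, hw_eq,
        one_smul, sub_self]
    have h0 : (0:ℝ) = ∑ z ∈ T, ∑ z' ∈ T, cw z * cw z' * (inner ℝ (w - z) (w - z') : ℝ) := by
      rw [← kz_sum_sq T cw (fun z => w - z)]
      simp [hzero]
    have h1 : ∑ z ∈ T, ∑ z' ∈ T, cw z * cw z'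
          * (m + (inner ℝ (p - x (ind z)) (p - x (ind z')) : ℝ))
        ≤ ∑ z ∈ T, ∑ z' ∈ T, cw z * cw z' * (inner ℝ (w - z) (w - z') : ℝ) := by
      refine Finset.sum_le_sum fun z hz => Finset.sum_le_sum fun z' hz' => ?_
      have hnn : 0 ≤ cw z * cw z' := mul_nonneg (hcw0 z hz) (hcw0 z' hz')
      have := hpair z hz z' hz'
      nlinarith
    have h2 : ∑ z ∈ T, ∑ z' ∈ T, cw z * cw z'
          * (m + (inner ℝ (p - x (ind z)) (p - x (ind z')) : ℝ))
        = m + ‖∑ z ∈ T, cw z • (p - x (ind z))‖^2 := by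
      rw [kz_sum_sq T cw (fun z => p - x (ind z))]
      simp_rw [mul_add, Finset.sum_add_distrib]
      congr 1
      have : ∑ z ∈ T, ∑ z' ∈ T, cw z * cw z' * m
          = (∑ z ∈ T, cw z) * ((∑ z' ∈ T, cw z') * m) := by
        rw [Finset.sum_mul]
        refine Finset.sum_congr rfl fun z _ => ?_
        rw [Finset.sum_mul, Finset.mul_sum]
        exact Finset.sum_congr rfl fun z' _ => by ring
      rw [this, hcw1]; ring
    have h3 : 0 ≤ ‖∑ z ∈ T, cw z • (p - x (ind z))‖^2 := sq_nonneg _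
    linarith
  -- conclusion
  refine ⟨w, Set.mem_iInter.2 fun i => ?_⟩
  rw [Metric.mem_closedBall, dist_eq_norm]
  have h1 := hle i
  have h2 := hp' i
  nlinarith [norm_nonneg (w - y i), norm_nonneg (p - x i), hr i]
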